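/- Let p be a prime and consider the Harish-Chandra function Ξ_p(g) = ∫_{SL(2,ℤ_p)} ‖g k e₁‖_p^{−1} dk on SL(2, ℚ_p), where dk is the Haar probability measure, e₁ = (1,0), and ‖·‖_p is the max-norm on ℚ_p². Then for every integer m ≥ 0, Ξ_p(diag(p^{−m}, p^m)) = p^{−m}((2m+1)(p−1) + 2)/(p+1). -/

import Mathlib

open MeasureTheory

/-- The compact group `SL(2, ℤ_p)`, realized as the set of `2 × 2` matrices over `ℚ_p` with
determinant `1` and entries of norm at most `1`. -/
def SL2Zp (p : ℕ) [Fact p.Prime] : Set (Matrix (Fin 2) (Fin 2) ℚ_[p]) :=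
  {k | k.det = 1 ∧ ∀ i j, ‖k i j‖ ≤ 1}

/-- The diagonal matrix `diag(p^{−m}, p^m)` in `SL(2, ℚ_p)`. -/
noncomputable def diagPm (p : ℕ) [Fact p.Prime] (m : ℕ) : Matrix (Fin 2) (Fin 2) ℚ_[p] :=
  Matrix.diagonal ![(p : ℚ_[p]) ^ (-(m : ℤ)), (p : ℚ_[p]) ^ (m : ℤ)]

namespace HCaux

variable {p : ℕ} [hp : Fact p.Prime]

/-- Closure of `SL2Zp` under multiplication. -/
lemma mul_mem {a b : Matrix (Fin 2) (Fin 2) ℚ_[p]} (ha : a ∈ SL2Zp p) (hb : b ∈ SL2Zp p) :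
    a * b ∈ SL2Zp p := by
  obtain ⟨hda, hna⟩ := ha
  obtain ⟨hdb, hnb⟩ := hb
  refine ⟨by rw [Matrix.det_mul, hda, hdb, one_mul], fun i j => ?_⟩
  rw [Matrix.mul_apply, Fin.sum_univ_two]
  refine le_trans (Padic.nonarchimedean _ _) (max_le ?_ ?_) <;>
  · rw [norm_mul]
    exact mul_le_one₀ (hna _ _) (norm_nonneg _) (hnb _ _)

/-- The explicit inverse of a determinant-one 2×2 matrix. -/
noncomputable def inv2 (a : Matrix (Fin 2) (Fin 2) ℚ_[p]) : Matrix (Fin 2) (Fin 2) ℚ_[p] :=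
  !![a 1 1, -(a 0 1); -(a 1 0), a 0 0]

lemma inv2_mem {a : Matrix (Fin 2) (Fin 2) ℚ_[p]} (ha : a ∈ SL2Zp p) : inv2 a ∈ SL2Zp p := by
  obtain ⟨hda, hna⟩ := ha
  rw [Matrix.det_fin_two] at hda
  constructor
  · rw [inv2, Matrix.det_fin_two_of]
    linear_combination hda
  · intro i j
    fin_cases i <;> fin_cases j <;> simpa [inv2] using hna _ _

lemma inv2_mul {a : Matrix (Fin 2) (Fin 2) ℚ_[p]} (ha : a ∈ SL2Zp p) : inv2 a * a = 1 := by
  have hda := ha.1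
  rw [Matrix.det_fin_two] at hda
  ext i j
  fin_cases i <;> fin_cases j <;>
    simp [inv2, Matrix.mul_apply, Fin.sum_univ_two, Matrix.one_apply] <;>
    first
    | linear_combination hda
    | ring

lemma mul_mem_iff {a k : Matrix (Fin 2) (Fin 2) ℚ_[p]} (ha : a ∈ SL2Zp p) :
    a * k ∈ SL2Zp p ↔ k ∈ SL2Zp p := by
  constructor
  · intro h
    have : k = inv2 a * (a * k) := by rw [← mul_assoc, inv2_mul ha, one_mul]
    rw [this]
    exact mul_mem (inv2_mem ha) h
  · exact fun h => mul_mem ha h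

/-- The first column of an element of `SL2Zp` has max-norm one. -/
lemma col_norm_eq_one {k : Matrix (Fin 2) (Fin 2) ℚ_[p]} (hk : k ∈ SL2Zp p) :
    max ‖k 0 0‖ ‖k 1 0‖ = 1 := by
  obtain ⟨hd, hn⟩ := hk
  refine le_antisymm (max_le (hn 0 0) (hn 1 0)) ?_
  rw [Matrix.det_fin_two] at hd
  calc (1 : ℝ) = ‖k 0 0 * k 1 1 + -(k 0 1 * k 1 0)‖ := by
        rw [← sub_eq_add_neg, hd, norm_one]
    _ ≤ max ‖k 0 0 * k 1 1‖ ‖-(k 0 1 * k 1 0)‖ := Padic.nonarchimedean _ _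
    _ ≤ max ‖k 0 0‖ ‖k 1 0‖ := by
        refine max_le_max ?_ ?_
        · rw [norm_mul]
          exact mul_le_of_le_one_right (norm_nonneg _) (hn 1 1)
        · rw [norm_neg, norm_mul]
          exact mul_le_of_le_one_left (norm_nonneg _) (hn 0 1)

end HCaux

namespace HCaux2

open HCaux

variable {p : ℕ} [hp : Fact p.Prime]

/-- `B j`: elements of `SL2Zp` whose lower-left entry is a unit and upper-left entry has
norm at most `p^{-j}`. -/
def setB (p : ℕ) [Fact p.Prime] (j : ℕ) : Set (Matrix (Fin 2) (Fin 2) ℚ_[p]) :=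
  {k | k ∈ SL2Zp p ∧ ‖k 1 0‖ = 1 ∧ ‖k 0 0‖ ≤ (p : ℝ) ^ (-(j : ℤ))}

/-- Translates of `setB`. -/
def setBa (p : ℕ) [Fact p.Prime] (j : ℕ) (a : ℚ_[p]) : Set (Matrix (Fin 2) (Fin 2) ℚ_[p]) :=
  {k | k ∈ SL2Zp p ∧ ‖k 1 0‖ = 1 ∧ ‖k 0 0 - a * k 1 0‖ ≤ (p : ℝ) ^ (-(j : ℤ))}

/-- `U`: elements of `SL2Zp` whose lower-left entry is a non-unit. -/
def setU (p : ℕ) [Fact p.Prime] : Set (Matrix (Fin 2) (Fin 2) ℚ_[p]) :=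
  {k | k ∈ SL2Zp p ∧ ‖k 0 0‖ = 1 ∧ ‖k 1 0‖ ≤ (p : ℝ) ^ (-(1 : ℤ))}

lemma setBa_zero (j : ℕ) : setBa p j 0 = setB p j := by
  ext k; simp [setBa, setB]

/-- The upper unipotent matrix. -/
noncomputable def umat (x : ℚ_[p]) : Matrix (Fin 2) (Fin 2) ℚ_[p] := !![1, x; 0, 1]

lemma umat_mem {x : ℚ_[p]} (hx : ‖x‖ ≤ 1) : umat x ∈ SL2Zp p := by
  constructor
  · rw [umat, Matrix.det_fin_two_of]; ring
  · intro i j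
    fin_cases i <;> fin_cases j <;> simp [umat] <;> exact hx

lemma umat_mul_apply₀ (x : ℚ_[p]) (k : Matrix (Fin 2) (Fin 2) ℚ_[p]) :
    (umat x * k) 0 0 = k 0 0 + x * k 1 0 := by
  simp [umat, Matrix.mul_apply, Fin.sum_univ_two]

lemma umat_mul_apply₁ (x : ℚ_[p]) (k : Matrix (Fin 2) (Fin 2) ℚ_[p]) :
    (umat x * k) 1 0 = k 1 0 := by
  simp [umat, Matrix.mul_apply, Fin.sum_univ_two]

lemma umat_preimage {x : ℚ_[p]} (hx : ‖x‖ ≤ 1) (j : ℕ) (a : ℚ_[p]) :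
    (fun k => umat x * k) ⁻¹' (setBa p j a) = setBa p j (a - x) := by
  ext k
  simp only [Set.mem_preimage, setBa, Set.mem_setOf_eq, umat_mul_apply₀, umat_mul_apply₁,
    mul_mem_iff (umat_mem hx)]
  have harg : k 0 0 + x * k 1 0 - a * k 1 0 = k 0 0 - (a - x) * k 1 0 := by ring
  rw [harg]

/-- The Weyl element. -/
noncomputable def wmat (p : ℕ) [Fact p.Prime] : Matrix (Fin 2) (Fin 2) ℚ_[p] := !![0, -1; 1, 0]

lemma wmat_mem : wmat p ∈ SL2Zp p := by
  constructor
  · rw [wmat, Matrix.det_fin_two_of]; ring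
  · intro i j
    fin_cases i <;> fin_cases j <;> simp [wmat]

lemma wmat_mul_apply₀ (k : Matrix (Fin 2) (Fin 2) ℚ_[p]) : (wmat p * k) 0 0 = -(k 1 0) := by
  simp [wmat, Matrix.mul_apply, Fin.sum_univ_two]

lemma wmat_mul_apply₁ (k : Matrix (Fin 2) (Fin 2) ℚ_[p]) : (wmat p * k) 1 0 = k 0 0 := by
  simp [wmat, Matrix.mul_apply, Fin.sum_univ_two]

lemma wmat_preimage : (fun k => wmat p * k) ⁻¹' (setB p 1) = setU p := by
  ext k
  simp only [Set.mem_preimage, setB, setU, Set.mem_setOf_eq, wmat_mul_apply₀, wmat_mul_apply₁,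
    mul_mem_iff wmat_mem, norm_neg]
  push_cast
  tauto

end HCaux2

namespace HCaux3

open HCaux HCaux2

variable {p : ℕ} [hp : Fact p.Prime]

lemma setB_succ_subset (j : ℕ) : setB p (j + 1) ⊆ setB p j := by
  rintro k ⟨h1, h2, h3⟩
  refine ⟨h1, h2, le_trans h3 ?_⟩
  apply zpow_le_zpow_right₀ (by exact_mod_cast hp.out.one_le)
  omega

lemma norm_nonunit {x : ℚ_[p]} (h1 : ‖x‖ ≤ 1) (h2 : ‖x‖ ≠ 1) : ‖x‖ ≤ (p : ℝ) ^ (-(1 : ℤ)) := by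
  rw [Padic.norm_le_pow_iff_norm_lt_pow_add_one]
  norm_num
  exact lt_of_le_of_ne h1 h2

/-- `SL2Zp` decomposes into `setB 0` and `setU`. -/
lemma union_eq : setB p 0 ∪ setU p = SL2Zp p := by
  ext k
  constructor
  · rintro (⟨h, _, _⟩ | ⟨h, _, _⟩) <;> exact h
  · intro hk
    have hmax := col_norm_eq_one hk
    by_cases h10 : ‖k 1 0‖ = 1
    · exact Or.inl ⟨hk, h10, by simpa using hk.2 0 0⟩
    · right
      have h10' : ‖k 1 0‖ ≤ (p : ℝ) ^ (-(1 : ℤ)) := norm_nonunit (hk.2 1 0) h10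
      have h00 : ‖k 0 0‖ = 1 := by
        rcases max_cases ‖k 0 0‖ ‖k 1 0‖ with ⟨he, _⟩ | ⟨he, _⟩
        · rw [← he]; exact hmax
        · exact absurd (he ▸ hmax) h10
      exact ⟨hk, h00, h10'⟩

lemma union_disjoint : Disjoint (setB p 0) (setU p) := by
  rw [Set.disjoint_left]
  rintro k ⟨_, h10, _⟩ ⟨_, _, h10'⟩
  rw [h10] at h10'
  have h1 : (p : ℝ) ^ (-(1 : ℤ)) < 1 := by
    apply zpow_lt_one_of_neg₀ (by exact_mod_cast hp.out.one_lt) (by norm_num)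
  linarith

/-- `setB 0` is covered by the translates `setBa j a`, `a < p ^ j`. -/
lemma setB_zero_eq_biUnion (j : ℕ) :
    setB p 0 = ⋃ a ∈ Finset.range (p ^ j), setBa p j (a : ℚ_[p]) := by
  ext k
  simp only [Set.mem_iUnion, Finset.mem_range, exists_prop]
  constructor
  · rintro ⟨hk, h10, _⟩
    have hk10 : k 1 0 ≠ 0 := by
      intro h; rw [h, norm_zero] at h10; norm_num at h10
    set t : ℚ_[p] := k 0 0 * (k 1 0)⁻¹ with ht_def
    have ht : ‖t‖ ≤ 1 := by
      rw [ht_def, norm_mul, norm_inv, h10, inv_one, mul_one]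
      exact hk.2 0 0
    set z : ℤ_[p] := ⟨t, ht⟩ with hz_def
    refine ⟨z.appr j, PadicInt.appr_lt z j, hk, h10, ?_⟩
    have hzn : ‖z - (z.appr j : ℤ_[p])‖ ≤ (p : ℝ) ^ (-(j : ℤ)) :=
      (PadicInt.norm_le_pow_iff_mem_span_pow _ j).mpr (PadicInt.appr_spec j z)
    have harg : k 0 0 - (z.appr j : ℚ_[p]) * k 1 0 = (t - (z.appr j : ℚ_[p])) * k 1 0 := by
      rw [sub_mul, ht_def, mul_assoc, inv_mul_cancel₀ hk10, mul_one]
    rw [harg, norm_mul, h10, mul_one]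
    have hcoe : ((z - (z.appr j : ℤ_[p]) : ℤ_[p]) : ℚ_[p]) = t - (z.appr j : ℚ_[p]) := by
      rw [PadicInt.coe_sub, PadicInt.coe_natCast, hz_def]
    rw [← hcoe]
    exact hzn
  · rintro ⟨a, _, hk, h10, hle⟩
    refine ⟨hk, h10, by simpa using hk.2 0 0⟩

/-- The translates `setBa j a` for distinct `a < p ^ j` are disjoint. -/
lemma setBa_disjoint (j : ℕ) :
    (↑(Finset.range (p ^ j)) : Set ℕ).PairwiseDisjoint (fun a : ℕ => setBa p j (a : ℚ_[p])) := by
  intro a ha b hb hab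
  simp only [Finset.coe_range, Set.mem_Iio] at ha hb
  rw [Function.onFun, Set.disjoint_left]
  rintro k ⟨_, h10, hka⟩ ⟨_, _, hkb⟩
  apply hab
  have hd : ‖((a : ℚ_[p]) - b) * k 1 0‖ ≤ (p : ℝ) ^ (-(j : ℤ)) := by
    have : ((a : ℚ_[p]) - b) * k 1 0 = (k 0 0 - (b : ℚ_[p]) * k 1 0) - (k 0 0 - (a : ℚ_[p]) * k 1 0) := by
      ring
    rw [this]
    rw [sub_eq_add_neg]
    refine le_trans (Padic.nonarchimedean _ _) (max_le hkb ?_)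
    rw [norm_neg]
    exact hka
  rw [norm_mul, h10, mul_one] at hd
  have hd' : ‖(((a : ℤ) - b : ℤ) : ℚ_[p])‖ ≤ (p : ℝ) ^ (-(j : ℤ)) := by
    push_cast
    exact hd
  have hdvd : ((p : ℤ) ^ j) ∣ ((a : ℤ) - b) := (Padic.norm_int_le_pow_iff_dvd _ j).mp hd'
  have : ((a : ℤ) - b) = 0 := by
    apply Int.eq_zero_of_dvd_of_natAbs_lt_natAbs hdvd
    have hpj : ((p : ℤ) ^ j).natAbs = p ^ j := by
      rw [Int.natAbs_pow]; norm_num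
    rw [hpj]
    omega
  omega

end HCaux3

namespace HCaux4

open HCaux HCaux2 HCaux3

variable {p : ℕ} [hp : Fact p.Prime]

lemma continuous_entry (i j : Fin 2) :
    Continuous fun k : Matrix (Fin 2) (Fin 2) ℚ_[p] => k i j :=
  Continuous.matrix_elem continuous_id i j

lemma isClosed_SL2Zp : IsClosed (SL2Zp p) := by
  have heq : SL2Zp p = {k : Matrix (Fin 2) (Fin 2) ℚ_[p] | k.det = 1} ∩
      ⋂ i, ⋂ j, {k : Matrix (Fin 2) (Fin 2) ℚ_[p] | ‖k i j‖ ≤ 1} := by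
    ext k
    simp [SL2Zp, Set.mem_iInter]
  rw [heq]
  refine IsClosed.inter (isClosed_eq (Continuous.matrix_det continuous_id) continuous_const) ?_
  exact isClosed_iInter fun i => isClosed_iInter fun j =>
    isClosed_le ((continuous_entry i j).norm) continuous_const

lemma isClosed_setBa (j : ℕ) (a : ℚ_[p]) : IsClosed (setBa p j a) := by
  have heq : setBa p j a = SL2Zp p ∩ ({k : Matrix (Fin 2) (Fin 2) ℚ_[p] | ‖k 1 0‖ = 1} ∩
      {k : Matrix (Fin 2) (Fin 2) ℚ_[p] | ‖k 0 0 - a * k 1 0‖ ≤ (p : ℝ) ^ (-(j : ℤ))}) := by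
    ext k; simp [setBa]; tauto
  rw [heq]
  refine isClosed_SL2Zp.inter (IsClosed.inter ?_ ?_)
  · exact isClosed_eq (continuous_entry 1 0).norm continuous_const
  · exact isClosed_le (((continuous_entry 0 0).sub
      (continuous_const.mul (continuous_entry 1 0))).norm) continuous_const

lemma isClosed_setB (j : ℕ) : IsClosed (setB p j) := by
  rw [← setBa_zero]
  exact isClosed_setBa j 0

lemma isClosed_setU : IsClosed (setU p) := by
  have heq : setU p = SL2Zp p ∩ ({k : Matrix (Fin 2) (Fin 2) ℚ_[p] | ‖k 0 0‖ = 1} ∩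
      {k : Matrix (Fin 2) (Fin 2) ℚ_[p] | ‖k 1 0‖ ≤ (p : ℝ) ^ (-(1 : ℤ))}) := by
    ext k; simp [setU]; tauto
  rw [heq]
  refine isClosed_SL2Zp.inter (IsClosed.inter ?_ ?_)
  · exact isClosed_eq (continuous_entry 0 0).norm continuous_const
  · exact isClosed_le (continuous_entry 1 0).norm continuous_const

section Measure

open MeasureTheory

variable [MeasurableSpace (Matrix (Fin 2) (Fin 2) ℚ_[p])]
  [BorelSpace (Matrix (Fin 2) (Fin 2) ℚ_[p])]
  (μ : Measure (Matrix (Fin 2) (Fin 2) ℚ_[p]))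

lemma meas_smul (hinv : ∀ k₀ ∈ SL2Zp p, Measure.map (fun x => k₀ * x) μ = μ)
    {k₀ : Matrix (Fin 2) (Fin 2) ℚ_[p]} (hk₀ : k₀ ∈ SL2Zp p)
    {S : Set (Matrix (Fin 2) (Fin 2) ℚ_[p])} (hS : MeasurableSet S) :
    μ ((fun x => k₀ * x) ⁻¹' S) = μ S := by
  have hc : Continuous fun x : Matrix (Fin 2) (Fin 2) ℚ_[p] => k₀ * x :=
    Continuous.matrix_mul continuous_const continuous_id
  conv_rhs => rw [← hinv k₀ hk₀]
  rw [Measure.map_apply hc.measurable hS]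

/-- All translates `setBa j a`, for `‖a‖ ≤ 1`, have the same measure as `setB j`. -/
lemma meas_setBa (hinv : ∀ k₀ ∈ SL2Zp p, Measure.map (fun x => k₀ * x) μ = μ)
    (j : ℕ) {a : ℚ_[p]} (ha : ‖a‖ ≤ 1) : μ (setBa p j a) = μ (setB p j) := by
  have := meas_smul μ hinv (umat_mem ha) (isClosed_setBa j a).measurableSet
  rw [umat_preimage ha j a, sub_self, setBa_zero] at this
  exact this.symm

/-- Scaling relation: `μ (setB 0) = p ^ j * μ (setB j)`. -/
lemma meas_setB_zero (hinv : ∀ k₀ ∈ SL2Zp p, Measure.map (fun x => k₀ * x) μ = μ) (j : ℕ) :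
    μ (setB p 0) = (p : ENNReal) ^ j * μ (setB p j) := by
  rw [setB_zero_eq_biUnion j]
  rw [measure_biUnion_finset (setBa_disjoint j)
    (fun a _ => (isClosed_setBa j (a : ℚ_[p])).measurableSet)]
  have hval : ∀ a ∈ Finset.range (p ^ j), μ (setBa p j (a : ℚ_[p])) = μ (setB p j) := by
    intro a _
    refine meas_setBa μ hinv j ?_
    have h := Padic.norm_int_le_one (p := p) (a : ℤ)
    push_cast at h
    exact h
  rw [Finset.sum_congr rfl hval, Finset.sum_const, Finset.card_range, nsmul_eq_mul]
  push_cast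
  ring

lemma meas_setU (hinv : ∀ k₀ ∈ SL2Zp p, Measure.map (fun x => k₀ * x) μ = μ) :
    μ (setU p) = μ (setB p 1) := by
  have := meas_smul μ hinv (wmat_mem) (isClosed_setB 1).measurableSet
  rw [wmat_preimage] at this
  exact this

end Measure

end HCaux4

namespace HCaux5

open HCaux HCaux2 HCaux3 HCaux4

variable {p : ℕ} [hp : Fact p.Prime]

lemma one_lt_q : (1 : ℝ) < (p : ℝ) := by exact_mod_cast hp.out.one_lt

lemma q_pos : (0 : ℝ) < (p : ℝ) := lt_trans one_pos one_lt_q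

lemma diag_norm₀ (m : ℕ) (k : Matrix (Fin 2) (Fin 2) ℚ_[p]) :
    ‖(diagPm p m * k) 0 0‖ = (p : ℝ) ^ (m : ℤ) * ‖k 0 0‖ := by
  rw [diagPm, Matrix.diagonal_mul, norm_mul]
  norm_num

lemma diag_norm₁ (m : ℕ) (k : Matrix (Fin 2) (Fin 2) ℚ_[p]) :
    ‖(diagPm p m * k) 1 0‖ = (p : ℝ) ^ (-(m : ℤ)) * ‖k 1 0‖ := by
  rw [diagPm, Matrix.diagonal_mul, norm_mul]
  norm_num

lemma val_setU (m : ℕ) {k : Matrix (Fin 2) (Fin 2) ℚ_[p]} (hk : k ∈ setU p) :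
    (max ‖(diagPm p m * k) 0 0‖ ‖(diagPm p m * k) 1 0‖)⁻¹ = (p : ℝ) ^ (-(m : ℤ)) := by
  obtain ⟨_, h00, h10⟩ := hk
  rw [diag_norm₀, diag_norm₁, h00, mul_one]
  rw [max_eq_left ?bound]
  case bound =>
    calc (p : ℝ) ^ (-(m : ℤ)) * ‖k 1 0‖ ≤ (p : ℝ) ^ (-(m : ℤ)) * (p : ℝ) ^ (-(1 : ℤ)) := by
          apply mul_le_mul_of_nonneg_left h10 (le_of_lt (zpow_pos q_pos _))
      _ = (p : ℝ) ^ (-(m : ℤ) + -(1 : ℤ)) := by rw [← zpow_add₀ (ne_of_gt q_pos)]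
      _ ≤ (p : ℝ) ^ (m : ℤ) := by
          apply zpow_le_zpow_right₀ (le_of_lt one_lt_q)
          omega
  rw [← zpow_neg]

lemma val_diff (m n : ℕ) (hn : n < 2 * m) {k : Matrix (Fin 2) (Fin 2) ℚ_[p]}
    (hk : k ∈ setB p n) (hk' : k ∉ setB p (n + 1)) :
    (max ‖(diagPm p m * k) 0 0‖ ‖(diagPm p m * k) 1 0‖)⁻¹ = (p : ℝ) ^ ((n : ℤ) - (m : ℤ)) := by
  obtain ⟨hmem, h10, h00⟩ := hk
  have h00eq : ‖k 0 0‖ = (p : ℝ) ^ (-(n : ℤ)) := by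
    refine le_antisymm h00 ?_
    by_contra hlt
    push_neg at hlt
    apply hk'
    refine ⟨hmem, h10, ?_⟩
    rw [Padic.norm_le_pow_iff_norm_lt_pow_add_one]
    have : (-((n : ℤ) + 1) + 1) = -(n : ℤ) := by ring
    rw [show ((-(((n : ℕ) + 1 : ℕ) : ℤ)) + 1) = -(n : ℤ) by push_cast; ring]
    exact hlt
  rw [diag_norm₀, diag_norm₁, h00eq, h10, mul_one, ← zpow_add₀ (ne_of_gt q_pos)]
  rw [max_eq_left ?bound]
  case bound =>
    apply zpow_le_zpow_right₀ (le_of_lt one_lt_q)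
    omega
  rw [← zpow_neg]
  congr 1
  ring

lemma val_T (m : ℕ) {k : Matrix (Fin 2) (Fin 2) ℚ_[p]} (hk : k ∈ setB p (2 * m)) :
    (max ‖(diagPm p m * k) 0 0‖ ‖(diagPm p m * k) 1 0‖)⁻¹ = (p : ℝ) ^ (m : ℤ) := by
  obtain ⟨hmem, h10, h00⟩ := hk
  rw [diag_norm₀, diag_norm₁, h10, mul_one]
  rw [max_eq_right ?bound]
  case bound =>
    calc (p : ℝ) ^ (m : ℤ) * ‖k 0 0‖ ≤ (p : ℝ) ^ (m : ℤ) * (p : ℝ) ^ (-((2 * m : ℕ) : ℤ)) := by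
          apply mul_le_mul_of_nonneg_left h00 (le_of_lt (zpow_pos q_pos _))
      _ = (p : ℝ) ^ ((m : ℤ) + -((2 * m : ℕ) : ℤ)) := by rw [← zpow_add₀ (ne_of_gt q_pos)]
      _ ≤ (p : ℝ) ^ (-(m : ℤ)) := by
          apply zpow_le_zpow_right₀ (le_of_lt one_lt_q)
          push_cast
          omega
  rw [← zpow_neg, neg_neg]

lemma val_nonneg (m : ℕ) (k : Matrix (Fin 2) (Fin 2) ℚ_[p]) :
    0 ≤ (max ‖(diagPm p m * k) 0 0‖ ‖(diagPm p m * k) 1 0‖)⁻¹ := by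
  apply inv_nonneg.mpr
  exact le_max_of_le_left (norm_nonneg _)

lemma val_bound (m : ℕ) {k : Matrix (Fin 2) (Fin 2) ℚ_[p]} (hk : k ∈ SL2Zp p) :
    (max ‖(diagPm p m * k) 0 0‖ ‖(diagPm p m * k) 1 0‖)⁻¹ ≤ (p : ℝ) ^ (m : ℤ) := by
  have hmax := col_norm_eq_one hk
  have hlb : (p : ℝ) ^ (-(m : ℤ)) ≤ max ‖(diagPm p m * k) 0 0‖ ‖(diagPm p m * k) 1 0‖ := by
    rcases max_cases ‖k 0 0‖ ‖k 1 0‖ with ⟨he, _⟩ | ⟨he, _⟩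
    · apply le_max_of_le_left
      rw [diag_norm₀, ← he, hmax, mul_one]
      apply zpow_le_zpow_right₀ (le_of_lt one_lt_q)
      omega
    · apply le_max_of_le_right
      rw [diag_norm₁, ← he, hmax, mul_one]
  calc (max ‖(diagPm p m * k) 0 0‖ ‖(diagPm p m * k) 1 0‖)⁻¹
      ≤ ((p : ℝ) ^ (-(m : ℤ)))⁻¹ := by
        apply inv_anti₀ (zpow_pos q_pos _) hlb
    _ = (p : ℝ) ^ (m : ℤ) := by rw [← zpow_neg, neg_neg]

end HCaux5


open HCaux HCaux2 HCaux3 HCaux4 HCaux5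

/-- The value of the Harish-Chandra function of `SL(2, ℚ_p)` at `diag(p^{−m}, p^m)`:
`Ξ_p(diag(p^{−m}, p^m)) = ∫_{SL(2,ℤ_p)} ‖diag(p^{−m}, p^m) k e₁‖_p^{−1} dk
  = p^{−m}((2m+1)(p−1) + 2)/(p+1)`, where `dk` is the Haar probability measure on `SL(2, ℤ_p)`
and `‖·‖_p` is the max-norm on `ℚ_p²`. -/
theorem harish_chandra_formula {p : ℕ} [Fact p.Prime]
    [MeasurableSpace (Matrix (Fin 2) (Fin 2) ℚ_[p])]
    [BorelSpace (Matrix (Fin 2) (Fin 2) ℚ_[p])]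
    (μ : Measure (Matrix (Fin 2) (Fin 2) ℚ_[p])) [IsProbabilityMeasure μ]
    (hsupp : μ (SL2Zp p)ᶜ = 0)
    (hinv : ∀ k₀ ∈ SL2Zp p, Measure.map (fun x => k₀ * x) μ = μ)
    (m : ℕ) :
    ∫ k in SL2Zp p,
        (max ‖(diagPm p m * k) 0 0‖ ‖(diagPm p m * k) 1 0‖)⁻¹ ∂μ =
      (p : ℝ) ^ (-(m : ℤ)) * ((2 * m + 1) * ((p : ℝ) - 1) + 2) / ((p : ℝ) + 1) := by
  classical
  have hq1 : (1 : ℝ) < (p : ℝ) := one_lt_q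
  have hq0 : (0 : ℝ) < (p : ℝ) := q_pos
  have hqne : (p : ℝ) ≠ 0 := ne_of_gt hq0
  have hq1ne : (p : ℝ) + 1 ≠ 0 := by positivity
  set f : Matrix (Fin 2) (Fin 2) ℚ_[p] → ℝ :=
    fun k => (max ‖(diagPm p m * k) 0 0‖ ‖(diagPm p m * k) 1 0‖)⁻¹ with hf_def
  have hKmeas : MeasurableSet (SL2Zp p) := (isClosed_SL2Zp (p := p)).measurableSet
  have hBmeas : ∀ j : ℕ, MeasurableSet (setB p j) := fun j => (isClosed_setB j).measurableSet
  have hUmeas : MeasurableSet (setU p) := (isClosed_setU (p := p)).measurableSet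
  have htotal : μ (SL2Zp p) = 1 := (prob_compl_eq_zero_iff hKmeas).mp hsupp
  -- measure computations
  have hscale : ∀ j : ℕ, (μ (setB p 0)).toReal = (p : ℝ) ^ j * (μ (setB p j)).toReal := by
    intro j
    rw [meas_setB_zero μ hinv j]
    simp [ENNReal.toReal_mul]
  have hUB1 : (μ (setU p)).toReal = (μ (setB p 1)).toReal := by rw [meas_setU μ hinv]
  have hsum : (μ (setB p 0)).toReal + (μ (setU p)).toReal = 1 := by
    rw [← ENNReal.toReal_add (measure_ne_top μ _) (measure_ne_top μ _),
      ← measure_union union_disjoint hUmeas, union_eq, htotal, ENNReal.toReal_one]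
  have hB1 : (μ (setB p 1)).toReal = 1 / ((p : ℝ) + 1) := by
    have h1 := hscale 1
    rw [pow_one] at h1
    rw [hUB1, h1] at hsum
    field_simp at hsum ⊢
    linarith
  have hB0 : (μ (setB p 0)).toReal = (p : ℝ) / ((p : ℝ) + 1) := by
    have h1 := hscale 1
    rw [pow_one, hB1] at h1
    rw [h1]
    field_simp
  have hBj : ∀ j : ℕ, (μ (setB p j)).toReal = (p : ℝ) / (((p : ℝ) + 1) * (p : ℝ) ^ j) := by
    intro j
    have h1 := hscale j
    rw [hB0] at h1
    have hpj : (p : ℝ) ^ j ≠ 0 := pow_ne_zero _ hqne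
    field_simp at h1 ⊢
    linarith
  have hdiff : ∀ n : ℕ,
      (μ (setB p n \ setB p (n + 1))).toReal = ((p : ℝ) - 1) / (((p : ℝ) + 1) * (p : ℝ) ^ n) := by
    intro n
    rw [measure_diff (setB_succ_subset n) (hBmeas (n + 1)).nullMeasurableSet (measure_ne_top μ _),
      ENNReal.toReal_sub_of_le (measure_mono (setB_succ_subset n)) (measure_ne_top μ _),
      hBj n, hBj (n + 1), pow_succ]
    have hpn : (p : ℝ) ^ n ≠ 0 := pow_ne_zero _ hqne
    field_simp
  -- integrability
  have hcont : Continuous fun k : Matrix (Fin 2) (Fin 2) ℚ_[p] =>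
      max ‖(diagPm p m * k) 0 0‖ ‖(diagPm p m * k) 1 0‖ :=
    (((continuous_const.matrix_mul continuous_id).matrix_elem 0 0).norm).max
      (((continuous_const.matrix_mul continuous_id).matrix_elem 1 0).norm)
  have hfmeas : AEStronglyMeasurable f μ := (hcont.measurable.inv).aestronglyMeasurable
  have hint : IntegrableOn f (SL2Zp p) μ := by
    apply Measure.integrableOn_of_bounded (M := (p : ℝ) ^ (m : ℤ)) (measure_ne_top μ _) hfmeas
    filter_upwards [ae_restrict_mem hKmeas] with k hk
    rw [Real.norm_eq_abs, abs_of_nonneg (val_nonneg m k)]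
    exact val_bound m hk
  have hBsub : ∀ j : ℕ, setB p j ⊆ SL2Zp p := fun j k hk => hk.1
  have hconstB : ∀ j : ℕ, IntegrableOn f (setB p j) μ := fun j => hint.mono_set (hBsub j)
  -- the key induction
  have key : ∀ d : ℕ, d ≤ 2 * m →
      ∫ k in setB p (2 * m - d), f k ∂μ =
        ((d : ℝ) * ((p : ℝ) - 1) + (p : ℝ)) / (((p : ℝ) + 1) * (p : ℝ) ^ m) := by
    intro d
    induction d with
    | zero =>
      intro _
      rw [Nat.sub_zero,
        setIntegral_congr_fun (hBmeas (2 * m)) (fun k hk => val_T m hk),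
        setIntegral_const, measureReal_def, hBj (2 * m), smul_eq_mul, zpow_natCast]
      have hqm : (p : ℝ) ^ m ≠ 0 := pow_ne_zero _ hqne
      rw [two_mul, pow_add]
      push_cast
      field_simp
      ring
    | succ d ih =>
      intro hd
      set n := 2 * m - (d + 1) with hn_def
      have h2 : 2 * m - d = n + 1 := by omega
      have hsplit : setB p n = (setB p n \ setB p (n + 1)) ∪ setB p (n + 1) :=
        (Set.diff_union_of_subset (setB_succ_subset n)).symm
      rw [hsplit, setIntegral_union disjoint_sdiff_self_left (hBmeas (n + 1))
        ((hconstB n).mono_set Set.diff_subset) (hconstB (n + 1)),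
        setIntegral_congr_fun ((hBmeas n).diff (hBmeas (n + 1)))
          (fun k hk => val_diff m n (by omega) hk.1 hk.2),
        setIntegral_const, smul_eq_mul, measureReal_def, hdiff n]
      have ihv := ih (by omega)
      rw [h2] at ihv
      rw [ihv]
      have hz : (p : ℝ) ^ ((n : ℤ) - (m : ℤ)) = (p : ℝ) ^ n / (p : ℝ) ^ m := by
        rw [zpow_sub₀ hqne, zpow_natCast, zpow_natCast]
      rw [hz]
      have hqm : (p : ℝ) ^ m ≠ 0 := pow_ne_zero _ hqne
      have hqn : (p : ℝ) ^ n ≠ 0 := pow_ne_zero _ hqne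
      field_simp
      push_cast
      ring
  have hB0int := key (2 * m) (le_refl _)
  rw [Nat.sub_self] at hB0int
  have hUint : ∫ k in setU p, f k ∂μ = (1 / ((p : ℝ) + 1)) * (p : ℝ) ^ (-(m : ℤ)) := by
    rw [setIntegral_congr_fun hUmeas (fun k hk => val_setU m hk), setIntegral_const,
      smul_eq_mul, measureReal_def, hUB1, hB1]
  have hsplitK : ∫ k in SL2Zp p, f k ∂μ = (∫ k in setB p 0, f k ∂μ) + ∫ k in setU p, f k ∂μ := by
    rw [← union_eq (p := p)]
    exact setIntegral_union union_disjoint hUmeas (hconstB 0)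
      (hint.mono_set (fun k hk => hk.1))
  show ∫ k in SL2Zp p, f k ∂μ = _
  rw [hsplitK, hB0int, hUint]
  have hqm : (p : ℝ) ^ m ≠ 0 := pow_ne_zero _ hqne
  rw [zpow_neg, zpow_natCast]
  push_cast
  field_simp
  ring
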